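/- Fix n ≥ 3 and three distinct indices e₁, e₂, e₃ ∈ {1,…,n}. Let f be the randomized mechanism for n agents in the Euclidean plane that, given a profile x ∈ (ℝ²)ⁿ, returns the centroid G = (x_{e₁}+x_{e₂}+x_{e₃})/3 with probability 1/2 and each of the points x_{e₁}, x_{e₂}, x_{e₃} with probability 1/6. Then: (i) f is truthful in expectation; (ii) for every profile x, C(f,x) ≤ 2·opt(x); and (iii) for every profile x for which there exist O ∈ ℝ² and R > 0 such that ‖x_j − O‖ ≤ R for all j ∈ {1,…,n}, ‖x_{e_i} − O‖ = R for i = 1,2,3, and O lies in the convex hull of {x_{e₁}, x_{e₂}, x_{e₃}} (i.e., the prediction of the extreme agents is correct and the minimum enclosing circle of all agents is the circumcircle of the three extreme agents), it holds that opt(x) = R and C(f,x) ≤ (5/3)·opt(x). -/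

import Mathlib

open MeasureTheory

/-- The randomized mechanism for `n` agents in the Euclidean plane that, given the
(predicted) extreme agents `e₁, e₂, e₃`, returns their centroid
`G = (x e₁ + x e₂ + x e₃)/3` with probability `1/2` and each of `x e₁`, `x e₂`, `x e₃`
with probability `1/6`. -/
noncomputable def centroidMech (n : ℕ) (e₁ e₂ e₃ : Fin n)
    (x : Fin n → EuclideanSpace ℝ (Fin 2)) : Measure (EuclideanSpace ℝ (Fin 2)) :=
  (1 / 2 : ENNReal) • Measure.dirac ((3⁻¹ : ℝ) • (x e₁ + x e₂ + x e₃))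
    + (1 / 6 : ENNReal) • Measure.dirac (x e₁)
    + (1 / 6 : ENNReal) • Measure.dirac (x e₂)
    + (1 / 6 : ENNReal) • Measure.dirac (x e₃)

lemma integrable_dirac_my {α : Type*} [MeasurableSpace α] [MeasurableSingletonClass α]
    (f : α → ℝ) (a : α) : Integrable f (Measure.dirac a) := by
  constructor
  · refine ⟨fun _ => f a, stronglyMeasurable_const, ?_⟩
    rw [Filter.EventuallyEq, ae_dirac_eq]
    exact Filter.eventually_pure.2 rfl
  · simp [HasFiniteIntegral, lintegral_dirac]

lemma centroidMech_integral (n : ℕ) (e₁ e₂ e₃ : Fin n) (x : Fin n → EuclideanSpace ℝ (Fin 2))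
    (g : EuclideanSpace ℝ (Fin 2) → ℝ) :
    ∫ y, g y ∂(centroidMech n e₁ e₂ e₃ x)
      = (1/2) * g ((3⁻¹ : ℝ) • (x e₁ + x e₂ + x e₃))
        + (1/6) * g (x e₁) + (1/6) * g (x e₂) + (1/6) * g (x e₃) := by
  have hint : ∀ (c : ENNReal) (p : EuclideanSpace ℝ (Fin 2)), c ≠ ⊤ →
      Integrable g (c • Measure.dirac p) :=
    fun c p hc => (integrable_dirac_my g p).smul_measure hc
  have i1 := hint (1/2) ((3⁻¹ : ℝ) • (x e₁ + x e₂ + x e₃)) (by simp)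
  have i2 := hint (1/6) (x e₁) (by simp)
  have i3 := hint (1/6) (x e₂) (by simp)
  have i4 := hint (1/6) (x e₃) (by simp)
  rw [centroidMech, integral_add_measure ((i1.add_measure i2).add_measure i3) i4,
    integral_add_measure (i1.add_measure i2) i3, integral_add_measure i1 i2,
    integral_smul_measure, integral_smul_measure, integral_smul_measure, integral_smul_measure,
    integral_dirac, integral_dirac, integral_dirac, integral_dirac]
  simp [smul_eq_mul]

lemma truth_key (a b c t : EuclideanSpace ℝ (Fin 2)) :
    1/2 * dist ((3⁻¹:ℝ) • (a+b+c)) a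
      ≤ 1/2 * dist ((3⁻¹:ℝ) • (t+b+c)) a + 1/6 * dist t a := by
  have h1 : dist ((3⁻¹:ℝ)•(a+b+c)) ((3⁻¹:ℝ)•(t+b+c)) = 3⁻¹ * dist a t := by
    rw [dist_smul₀, dist_add_right, dist_add_right]
    norm_num
  have h2 := dist_triangle ((3⁻¹:ℝ)•(a+b+c)) ((3⁻¹:ℝ)•(t+b+c)) a
  rw [h1] at h2
  rw [dist_comm t a]
  linarith

lemma sum_aux {E : Type*} [NormedAddCommGroup E] [NormedSpace ℝ E]
    (u₁ u₂ u₃ : E) (l₁ l₂ l₃ R : ℝ) (h₁ : ‖u₁‖ = R) (h₂ : ‖u₂‖ = R) (h₃ : ‖u₃‖ = R)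
    (hl₁ : 0 ≤ l₁) (hl₂ : 0 ≤ l₂)
    (hsum : l₁ + l₂ + l₃ = 1) (hm₁ : l₁ ≤ l₃) (hm₂ : l₂ ≤ l₃)
    (hz : l₁ • u₁ + l₂ • u₂ + l₃ • u₃ = 0) : ‖u₁ + u₂ + u₃‖ ≤ R := by
  have hR : 0 ≤ R := h₁ ▸ norm_nonneg u₁
  have hl₃ : 0 < l₃ := by linarith
  rcases eq_or_lt_of_le hR with hR0 | hR0
  · have e1 : u₁ = 0 := by rw [← norm_eq_zero, h₁, ← hR0]
    have e2 : u₂ = 0 := by rw [← norm_eq_zero, h₂, ← hR0]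
    have e3 : u₃ = 0 := by rw [← norm_eq_zero, h₃, ← hR0]
    simp [e1, e2, e3, ← hR0]
  have key : l₃ • u₃ = -(l₁ • u₁ + l₂ • u₂) := by
    have h5 : l₁ • u₁ + l₂ • u₂ + l₃ • u₃ - (l₁ • u₁ + l₂ • u₂)
        = 0 - (l₁ • u₁ + l₂ • u₂) := by rw [hz]
    simpa [add_sub_cancel_left] using h5
  have hn3 : l₃ * R ≤ l₁ * R + l₂ * R := by
    have h6 : ‖l₃ • u₃‖ = ‖l₁ • u₁ + l₂ • u₂‖ := by rw [key, norm_neg]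
    rw [norm_smul, h₃, Real.norm_eq_abs, abs_of_pos hl₃] at h6
    calc l₃ * R = ‖l₁ • u₁ + l₂ • u₂‖ := h6
      _ ≤ ‖l₁ • u₁‖ + ‖l₂ • u₂‖ := norm_add_le _ _
      _ = l₁ * R + l₂ * R := by
          rw [norm_smul, norm_smul, h₁, h₂, Real.norm_eq_abs, Real.norm_eq_abs,
            abs_of_nonneg hl₁, abs_of_nonneg hl₂]
  have hl3half : l₃ ≤ 1/2 := by nlinarith
  have hs : l₃ • (u₁ + u₂ + u₃) = (l₃ - l₁) • u₁ + (l₃ - l₂) • u₂ := by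
    have h7 : l₃ • (u₁ + u₂ + u₃)
        = (l₃ - l₁) • u₁ + (l₃ - l₂) • u₂ + (l₁ • u₁ + l₂ • u₂ + l₃ • u₃) := by module
    rw [h7, hz, add_zero]
  have h8 : l₃ * ‖u₁ + u₂ + u₃‖ ≤ (l₃ - l₁) * R + (l₃ - l₂) * R := by
    calc l₃ * ‖u₁ + u₂ + u₃‖ = ‖l₃ • (u₁ + u₂ + u₃)‖ := by
          rw [norm_smul, Real.norm_eq_abs, abs_of_pos hl₃]
      _ = ‖(l₃ - l₁) • u₁ + (l₃ - l₂) • u₂‖ := by rw [hs]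
      _ ≤ ‖(l₃ - l₁) • u₁‖ + ‖(l₃ - l₂) • u₂‖ := norm_add_le _ _
      _ = (l₃ - l₁) * R + (l₃ - l₂) * R := by
          rw [norm_smul, norm_smul, h₁, h₂, Real.norm_eq_abs, Real.norm_eq_abs,
            abs_of_nonneg (by linarith), abs_of_nonneg (by linarith)]
  have h9 : l₃ * ‖u₁ + u₂ + u₃‖ ≤ l₃ * R := by nlinarith
  exact le_of_mul_le_mul_left h9 hl₃

lemma sum_key {E : Type*} [NormedAddCommGroup E] [NormedSpace ℝ E]
    (u₁ u₂ u₃ : E) (l₁ l₂ l₃ R : ℝ) (h₁ : ‖u₁‖ = R) (h₂ : ‖u₂‖ = R) (h₃ : ‖u₃‖ = R)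
    (hl₁ : 0 ≤ l₁) (hl₂ : 0 ≤ l₂) (hl₃ : 0 ≤ l₃)
    (hsum : l₁ + l₂ + l₃ = 1)
    (hz : l₁ • u₁ + l₂ • u₂ + l₃ • u₃ = 0) : ‖u₁ + u₂ + u₃‖ ≤ R := by
  rcases le_total l₁ l₂ with h12 | h12
  · rcases le_total l₂ l₃ with h23 | h23
    · exact sum_aux u₁ u₂ u₃ l₁ l₂ l₃ R h₁ h₂ h₃ hl₁ hl₂ hsum (le_trans h12 h23) h23 hz
    · have := sum_aux u₁ u₃ u₂ l₁ l₃ l₂ R h₁ h₃ h₂ hl₁ hl₃ (by linarith)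
        h12 h23 (by rw [← hz]; module)
      calc ‖u₁ + u₂ + u₃‖ = ‖u₁ + u₃ + u₂‖ := by rw [show u₁ + u₂ + u₃ = u₁ + u₃ + u₂ by module]
        _ ≤ R := this
  · rcases le_total l₁ l₃ with h13 | h13
    · have := sum_aux u₂ u₁ u₃ l₂ l₁ l₃ R h₂ h₁ h₃ hl₂ hl₁ (by linarith)
        (le_trans h12 h13) h13 (by rw [← hz]; module)
      calc ‖u₁ + u₂ + u₃‖ = ‖u₂ + u₁ + u₃‖ := by rw [show u₁ + u₂ + u₃ = u₂ + u₁ + u₃ by module]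
        _ ≤ R := this
    · have := sum_aux u₂ u₃ u₁ l₂ l₃ l₁ R h₂ h₃ h₁ hl₂ hl₃ (by linarith)
        h12 h13 (by rw [← hz]; module)
      calc ‖u₁ + u₂ + u₃‖ = ‖u₂ + u₃ + u₁‖ := by rw [show u₁ + u₂ + u₃ = u₂ + u₃ + u₁ by module]
        _ ≤ R := this

set_option maxHeartbeats 1000000 in
/-- the mechanism `centroidMech` (i) is truthful in expectation,
(ii) is 2-robust (cost at most `2·opt(x)` on every profile), and (iii) on profiles for
which there are `O` and `R > 0` with all agents in the closed disk of center `O` and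
radius `R`, the three agents `e₁, e₂, e₃` on its boundary circle, and `O` in the convex
hull of `{x e₁, x e₂, x e₃}` (the prediction of the extreme agents is correct and the
minimum enclosing circle is the circumcircle of the three extreme agents), it holds that
`opt(x) = R` and the cost is at most `(5/3)·opt(x)`. -/
theorem stmt16 (n : ℕ) (hn : 3 ≤ n) (e₁ e₂ e₃ : Fin n)
    (hee : e₁ ≠ e₂ ∧ e₁ ≠ e₃ ∧ e₂ ≠ e₃) :
    -- (i) truthful in expectation
    (∀ (x : Fin n → EuclideanSpace ℝ (Fin 2)) (i : Fin n)
        (x' : EuclideanSpace ℝ (Fin 2)),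
      ∫ y, dist y (x i) ∂(centroidMech n e₁ e₂ e₃ x)
        ≤ ∫ y, dist y (x i) ∂(centroidMech n e₁ e₂ e₃ (Function.update x i x'))) ∧
    -- (ii) 2-robustness
    (∀ x : Fin n → EuclideanSpace ℝ (Fin 2),
      ∫ y, (⨆ i, dist y (x i)) ∂(centroidMech n e₁ e₂ e₃ x)
        ≤ 2 * ⨅ y : EuclideanSpace ℝ (Fin 2), ⨆ i, dist y (x i)) ∧
    -- (iii) (5/3)-consistency when the extreme-agent prediction is correct
    (∀ (x : Fin n → EuclideanSpace ℝ (Fin 2)) (O : EuclideanSpace ℝ (Fin 2)) (R : ℝ),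
      0 < R →
      (∀ j, dist (x j) O ≤ R) →
      dist (x e₁) O = R → dist (x e₂) O = R → dist (x e₃) O = R →
      O ∈ convexHull ℝ {x e₁, x e₂, x e₃} →
      (⨅ y : EuclideanSpace ℝ (Fin 2), ⨆ i, dist y (x i)) = R ∧
      ∫ y, (⨆ i, dist y (x i)) ∂(centroidMech n e₁ e₂ e₃ x)
        ≤ (5 / 3) * ⨅ y : EuclideanSpace ℝ (Fin 2), ⨆ i, dist y (x i)) := by
  obtain ⟨h12, h13, h23⟩ := hee
  have hpos : 0 < n := by omega
  haveI : Nonempty (Fin n) := ⟨⟨0, hpos⟩⟩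
  -- basic sup facts
  have hBdd : ∀ (x : Fin n → EuclideanSpace ℝ (Fin 2)) (y : EuclideanSpace ℝ (Fin 2)),
      BddAbove (Set.range fun i => dist y (x i)) :=
    fun x y => Set.Finite.bddAbove (Set.finite_range _)
  have hle : ∀ (x : Fin n → EuclideanSpace ℝ (Fin 2)) (y : EuclideanSpace ℝ (Fin 2)) (j : Fin n),
      dist y (x j) ≤ ⨆ i, dist y (x i) := fun x y j => le_ciSup (hBdd x y) j
  have hS0 : ∀ (x : Fin n → EuclideanSpace ℝ (Fin 2)) (y : EuclideanSpace ℝ (Fin 2)),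
      0 ≤ ⨆ i, dist y (x i) := fun x y => le_trans dist_nonneg (hle x y e₁)
  refine ⟨?_, ?_, ?_⟩
  · -- (i) truthfulness
    intro x i x'
    rw [centroidMech_integral, centroidMech_integral]
    rcases eq_or_ne i e₁ with rfl | hne1
    · simp only [Function.update_self, Function.update_of_ne (Ne.symm h12),
        Function.update_of_ne (Ne.symm h13)]
      have := truth_key (x i) (x e₂) (x e₃) x'
      simp only [dist_self]
      linarith
    · rcases eq_or_ne i e₂ with rfl | hne2
      · simp only [Function.update_self, Function.update_of_ne h12,
          Function.update_of_ne (Ne.symm h23)]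
        have h := truth_key (x i) (x e₁) (x e₃) x'
        rw [show x i + x e₁ + x e₃ = x e₁ + x i + x e₃ by abel,
          show x' + x e₁ + x e₃ = x e₁ + x' + x e₃ by abel] at h
        simp only [dist_self]
        linarith
      · rcases eq_or_ne i e₃ with rfl | hne3
        · simp only [Function.update_self, Function.update_of_ne h13,
            Function.update_of_ne h23]
          have h := truth_key (x i) (x e₁) (x e₂) x'
          rw [show x i + x e₁ + x e₂ = x e₁ + x e₂ + x i by abel,
            show x' + x e₁ + x e₂ = x e₁ + x e₂ + x' by abel] at h
          simp only [dist_self]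
          linarith
        · simp only [Function.update_of_ne (Ne.symm hne1),
            Function.update_of_ne (Ne.symm hne2), Function.update_of_ne (Ne.symm hne3)]
          exact le_refl _
  · -- (ii) 2-robustness
    intro x
    rw [centroidMech_integral n e₁ e₂ e₃ x (fun y => ⨆ i, dist y (x i))]
    set G : EuclideanSpace ℝ (Fin 2) := (3⁻¹ : ℝ) • (x e₁ + x e₂ + x e₃) with hG
    have main : ∀ y : EuclideanSpace ℝ (Fin 2),
        1/2 * (⨆ i, dist G (x i)) + 1/6 * (⨆ i, dist (x e₁) (x i))
          + 1/6 * (⨆ i, dist (x e₂) (x i)) + 1/6 * (⨆ i, dist (x e₃) (x i))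
          ≤ 2 * ⨆ i, dist y (x i) := by
      intro y
      set S : ℝ := ⨆ i, dist y (x i) with hSdef
      have hdy : ∀ k : Fin n, dist (x k) y ≤ S := by
        intro k; rw [dist_comm]; exact hle x y k
      have bp : ∀ k : Fin n, (⨆ i, dist (x k) (x i)) ≤ 2 * S := by
        intro k
        refine ciSup_le fun j => ?_
        calc dist (x k) (x j) ≤ dist (x k) y + dist y (x j) := dist_triangle _ _ _
          _ ≤ S + S := add_le_add (hdy k) (hle x y j)
          _ = 2 * S := by ring
      have hGy : dist G y ≤ S := by
        have hGsub : G - y = (3⁻¹ : ℝ) • ((x e₁ - y) + (x e₂ - y) + (x e₃ - y)) := by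
          rw [hG]; module
        have : dist G y = 3⁻¹ * ‖(x e₁ - y) + (x e₂ - y) + (x e₃ - y)‖ := by
          rw [dist_eq_norm, hGsub, norm_smul, Real.norm_eq_abs]
          norm_num
        rw [this]
        have htri := norm_add₃_le (a := x e₁ - y) (b := x e₂ - y) (c := x e₃ - y)
        have b1 : ‖x e₁ - y‖ ≤ S := by rw [← dist_eq_norm]; exact hdy e₁
        have b2 : ‖x e₂ - y‖ ≤ S := by rw [← dist_eq_norm]; exact hdy e₂
        have b3 : ‖x e₃ - y‖ ≤ S := by rw [← dist_eq_norm]; exact hdy e₃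
        nlinarith [norm_nonneg ((x e₁ - y) + (x e₂ - y) + (x e₃ - y))]
      have bG : (⨆ i, dist G (x i)) ≤ 2 * S := by
        refine ciSup_le fun j => ?_
        calc dist G (x j) ≤ dist G y + dist y (x j) := dist_triangle _ _ _
          _ ≤ S + S := add_le_add hGy (hle x y j)
          _ = 2 * S := by ring
      have := bp e₁; have := bp e₂; have := bp e₃
      linarith
    have hhalf : (1/2 * (⨆ i, dist G (x i)) + 1/6 * (⨆ i, dist (x e₁) (x i))
          + 1/6 * (⨆ i, dist (x e₂) (x i)) + 1/6 * (⨆ i, dist (x e₃) (x i))) / 2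
        ≤ ⨅ y : EuclideanSpace ℝ (Fin 2), ⨆ i, dist y (x i) :=
      le_ciInf fun y => by linarith [main y]
    linarith
  · -- (iii) consistency
    intro x O R hR hall hd1 hd2 hd3 hhull
    -- extract convex weights
    rw [show ({x e₁, x e₂, x e₃} : Set (EuclideanSpace ℝ (Fin 2)))
        = insert (x e₁) {x e₂, x e₃} from rfl,
      convexHull_insert ⟨x e₂, by simp⟩, mem_convexJoin] at hhull
    obtain ⟨a, ha, z, hz, hseg⟩ := hhull
    rw [Set.mem_singleton_iff] at ha
    subst ha
    rw [convexHull_pair] at hz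
    obtain ⟨r, s, hr, hs, hrs, hzeq⟩ := hz
    obtain ⟨p, q, hp, hq, hpq, hOeq⟩ := hseg
    set u₁ : EuclideanSpace ℝ (Fin 2) := x e₁ - O with hu₁def
    set u₂ : EuclideanSpace ℝ (Fin 2) := x e₂ - O with hu₂def
    set u₃ : EuclideanSpace ℝ (Fin 2) := x e₃ - O with hu₃def
    have hn1 : ‖u₁‖ = R := by rw [hu₁def, ← dist_eq_norm]; exact hd1
    have hn2 : ‖u₂‖ = R := by rw [hu₂def, ← dist_eq_norm]; exact hd2
    have hn3 : ‖u₃‖ = R := by rw [hu₃def, ← dist_eq_norm]; exact hd3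
    have hl₂ : 0 ≤ q * r := mul_nonneg hq hr
    have hl₃ : 0 ≤ q * s := mul_nonneg hq hs
    have hcoef : p + q * r + q * s = 1 := by nlinarith
    have hv : p • x e₁ + (q*r) • x e₂ + (q*s) • x e₃ = O := by
      rw [← hOeq, ← hzeq]; module
    have hz0 : p • u₁ + (q*r) • u₂ + (q*s) • u₃ = 0 := by
      rw [hu₁def, hu₂def, hu₃def]
      calc p • (x e₁ - O) + (q*r) • (x e₂ - O) + (q*s) • (x e₃ - O)
          = (p • x e₁ + (q*r) • x e₂ + (q*s) • x e₃) - (p + q*r + q*s) • O := by module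
        _ = O - (1:ℝ) • O := by rw [hv, hcoef]
        _ = 0 := by simp
    -- opt = R
    have hBddBelow : BddBelow (Set.range fun y : EuclideanSpace ℝ (Fin 2) =>
        ⨆ i, dist y (x i)) := by
      refine ⟨0, ?_⟩
      rintro t ⟨y, rfl⟩
      exact hS0 x y
    have hSO : (⨆ i, dist O (x i)) ≤ R := by
      refine ciSup_le fun j => ?_
      rw [dist_comm]; exact hall j
    have hinf_le : (⨅ y : EuclideanSpace ℝ (Fin 2), ⨆ i, dist y (x i)) ≤ R :=
      le_trans (ciInf_le hBddBelow O) hSO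
    have hR_le : R ≤ ⨅ y : EuclideanSpace ℝ (Fin 2), ⨆ i, dist y (x i) := by
      refine le_ciInf fun y => ?_
      set w : EuclideanSpace ℝ (Fin 2) := y - O with hwdef
      have hsum0 : p * (inner ℝ (u₁) (w) : ℝ) + (q*r) * (inner ℝ (u₂) (w) : ℝ) + (q*s) * (inner ℝ (u₃) (w) : ℝ) = 0 := by
        have h0 : (inner ℝ (p • u₁ + (q*r) • u₂ + (q*s) • u₃) w : ℝ) = 0 := by
          rw [hz0, inner_zero_left]
        rw [inner_add_left, inner_add_left, real_inner_smul_left, real_inner_smul_left,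
          real_inner_smul_left] at h0
        linarith
      -- one of the inner products is ≤ 0
      have hex : ∃ k : Fin n, k ∈ ({e₁, e₂, e₃} : Set (Fin n)) ∧ (inner ℝ (x k - O) (w) : ℝ) ≤ 0 := by
        by_contra hcon
        push_neg at hcon
        have t1 : 0 < (inner ℝ (u₁) (w) : ℝ) := hcon e₁ (by simp)
        have t2 : 0 < (inner ℝ (u₂) (w) : ℝ) := hcon e₂ (by simp)
        have t3 : 0 < (inner ℝ (u₃) (w) : ℝ) := hcon e₃ (by simp)
        set m : ℝ := min (inner ℝ (u₁) (w) : ℝ) (min (inner ℝ (u₂) (w) : ℝ) (inner ℝ (u₃) (w) : ℝ)) with hm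
        have hm0 : 0 < m := lt_min t1 (lt_min t2 t3)
        have hm1 : m ≤ (inner ℝ (u₁) (w) : ℝ) := min_le_left _ _
        have hm2 : m ≤ (inner ℝ (u₂) (w) : ℝ) := le_trans (min_le_right _ _) (min_le_left _ _)
        have hm3 : m ≤ (inner ℝ (u₃) (w) : ℝ) := le_trans (min_le_right _ _) (min_le_right _ _)
        have c1 : p * m ≤ p * (inner ℝ (u₁) (w) : ℝ) := mul_le_mul_of_nonneg_left hm1 hp
        have c2 : (q*r) * m ≤ (q*r) * (inner ℝ (u₂) (w) : ℝ) := mul_le_mul_of_nonneg_left hm2 hl₂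
        have c3 : (q*s) * m ≤ (q*s) * (inner ℝ (u₃) (w) : ℝ) := mul_le_mul_of_nonneg_left hm3 hl₃
        nlinarith
      obtain ⟨k, _, hk⟩ := hex
      have hknorm : ‖x k - O‖ = R := by
        rcases (by assumption : k ∈ ({e₁, e₂, e₃} : Set (Fin n))) with h | h | h <;>
          (subst h; first
            | (rw [← dist_eq_norm]; exact hd1)
            | (rw [← dist_eq_norm]; exact hd2)
            | (rw [← dist_eq_norm]; exact hd3))
      have hdk : R ≤ dist y (x k) := by
        have hsub : y - x k = w - (x k - O) := by rw [hwdef]; module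
        have hsq : (dist y (x k))^2 = ‖w‖^2 - 2 * (inner ℝ (w) (x k - O) : ℝ) + R^2 := by
          rw [dist_eq_norm, hsub, norm_sub_sq_real, hknorm]
        have hinner : (inner ℝ (w) (x k - O) : ℝ) ≤ 0 := by rwa [real_inner_comm]
        nlinarith [dist_nonneg (x := y) (y := x k), sq_nonneg ‖w‖]
      exact le_trans hdk (hle x y k)
    have hopt : (⨅ y : EuclideanSpace ℝ (Fin 2), ⨆ i, dist y (x i)) = R :=
      le_antisymm hinf_le hR_le
    refine ⟨hopt, ?_⟩
    rw [centroidMech_integral n e₁ e₂ e₃ x (fun y => ⨆ i, dist y (x i)), hopt]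
    set G : EuclideanSpace ℝ (Fin 2) := (3⁻¹ : ℝ) • (x e₁ + x e₂ + x e₃) with hG
    have hOx : ∀ j, dist O (x j) ≤ R := fun j => by rw [dist_comm]; exact hall j
    have bp : ∀ k : Fin n, dist (x k) O = R → (⨆ i, dist (x k) (x i)) ≤ 2 * R := by
      intro k hk
      refine ciSup_le fun j => ?_
      calc dist (x k) (x j) ≤ dist (x k) O + dist O (x j) := dist_triangle _ _ _
        _ ≤ R + R := add_le_add hk.le (hOx j)
        _ = 2 * R := by ring
    have hGO : dist G O ≤ 3⁻¹ * R := by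
      have hGsub : G - O = (3⁻¹ : ℝ) • (u₁ + u₂ + u₃) := by
        rw [hG, hu₁def, hu₂def, hu₃def]; module
      have hkey : ‖u₁ + u₂ + u₃‖ ≤ R :=
        sum_key u₁ u₂ u₃ p (q*r) (q*s) R hn1 hn2 hn3 hp hl₂ hl₃ hcoef hz0
      have : dist G O = 3⁻¹ * ‖u₁ + u₂ + u₃‖ := by
        rw [dist_eq_norm, hGsub, norm_smul, Real.norm_eq_abs]
        norm_num
      rw [this]
      linarith
    have bG : (⨆ i, dist G (x i)) ≤ 4/3 * R := by
      refine ciSup_le fun j => ?_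
      calc dist G (x j) ≤ dist G O + dist O (x j) := dist_triangle _ _ _
        _ ≤ 3⁻¹ * R + R := add_le_add hGO (hOx j)
        _ = 4/3 * R := by ring
    have := bp e₁ hd1; have := bp e₂ hd2; have := bp e₃ hd3
    linarith
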